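/- For f ∈ L¹([-1,1]), the tail of the Gaussian-smoothed Fourier series satisfies ‖N_σ(1 - π_k)f‖_{L²} ≤ Γ_{σ,k} ‖f‖_{L¹}, where Γ_{σ,k} = (1/(σ√(2π))) e^{-σ²k²π²/2}. -/

import Mathlib

open Real MeasureTheory

noncomputable def gauss (σ x : ℝ) : ℝ :=
  (1 / (σ * Real.sqrt (2 * π))) * Real.exp (-x ^ 2 / (2 * σ ^ 2))

/-- The 2-periodized Gaussian kernel. -/
noncomputable def K (σ u : ℝ) : ℝ := ∑' j : ℤ, gauss σ (u + 2 * j)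

/-- Fourier coefficient on `[-1,1]` of a complex-valued function. -/
noncomputable def Fc (f : ℝ → ℂ) (j : ℤ) : ℂ :=
  (1 / 2) * ∫ x in Set.Icc (-1 : ℝ) 1, f x * Complex.exp (-(j * π * Complex.I * x))

/-- Galerkin projection onto Fourier modes of order at most `k`. -/
noncomputable def galerkin (k : ℕ) (f : ℝ → ℂ) (x : ℝ) : ℂ :=
  ∑ j ∈ Finset.Icc (-(k : ℤ)) (k : ℤ), Fc f j * Complex.exp (j * π * Complex.I * x)

/-- Periodized Gaussian smoothing operator acting on complex-valued functions. -/
noncomputable def Nop (σ : ℝ) (g : ℝ → ℂ) (x : ℝ) : ℂ :=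
  ∫ y in Set.Icc (-1 : ℝ) 1, (K σ (x - y) : ℂ) * g y

namespace TailAux

noncomputable def w (σ : ℝ) (j : ℤ) : ℝ := Real.exp (-(σ^2 * (j:ℝ)^2 * π^2 / 2))

lemma w_pos (σ : ℝ) (j : ℤ) : 0 < w σ j := Real.exp_pos _

lemma summable_exp_sq {a : ℝ} (ha : 0 < a) :
    Summable (fun j : ℤ => Real.exp (-(a * (j:ℝ)^2))) := by
  have hq : Real.exp (-a) < 1 := Real.exp_lt_one_iff.mpr (by linarith)
  have hgeom : Summable (fun n : ℕ => Real.exp (-a) ^ n) :=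
    summable_geometric_of_lt_one (Real.exp_nonneg _) hq
  have key : ∀ n : ℕ, Real.exp (-(a * (n:ℝ)^2)) ≤ Real.exp (-a) ^ n := by
    intro n
    rw [← Real.exp_nat_mul]
    apply Real.exp_le_exp.mpr
    have hn : n ≤ n^2 := Nat.le_self_pow two_ne_zero n
    have : (n:ℝ) ≤ (n:ℝ)^2 := by exact_mod_cast hn
    nlinarith
  have h1 : Summable (fun n : ℕ => Real.exp (-(a * (n:ℝ)^2))) :=
    Summable.of_nonneg_of_le (fun n => Real.exp_nonneg _) key hgeom
  apply Summable.of_nat_of_neg <;> simpa using h1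

lemma summable_w {σ : ℝ} (hσ : 0 < σ) : Summable (w σ) := by
  have h : w σ = fun j : ℤ => Real.exp (-((σ^2*π^2/2) * (j:ℝ)^2)) := by
    funext j; rw [w]; congr 1; ring
  rw [h]
  exact summable_exp_sq (by positivity)

lemma tail_sum_le {a : ℝ} (ha : 0 < a) (k : ℕ) :
    ∑' j : ℤ, (if j.natAbs ≤ k then 0 else Real.exp (-(a * (j:ℝ)^2)))
      ≤ (π / a) * Real.exp (-(a * (k:ℝ)^2)) := by
  set q := Real.exp (-a) with hq_def
  have hq0 : 0 < q := Real.exp_pos _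
  have hq1 : q < 1 := Real.exp_lt_one_iff.mpr (by linarith)
  have h1q : 0 < 1 - q := by linarith
  set d : ℤ → ℝ := fun j => if j.natAbs ≤ k then 0 else Real.exp (-(a * (j:ℝ)^2)) with hd_def
  have hd_nonneg : ∀ j, 0 ≤ d j := by
    intro j; rw [hd_def]; dsimp only; split_ifs <;> positivity
  have hd_le : ∀ j, d j ≤ Real.exp (-(a * (j:ℝ)^2)) := by
    intro j; rw [hd_def]; dsimp only; split_ifs
    · positivity
    · exact le_rfl
  have hd_sum : Summable d :=
    Summable.of_nonneg_of_le hd_nonneg hd_le (summable_exp_sq ha)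
  have hinj1 : Function.Injective (fun n : ℕ => (n : ℤ)) := Nat.cast_injective
  have hinj2 : Function.Injective (fun n : ℕ => -((n : ℤ) + 1)) := by
    intro m n h; simpa using h
  have hsum1 : Summable (fun n : ℕ => d n) := hd_sum.comp_injective hinj1
  have hsum2 : Summable (fun n : ℕ => d (-((n:ℤ) + 1))) := hd_sum.comp_injective hinj2
  set B : ℝ := Real.exp (-(a * (k:ℝ)^2)) * q * (1 - q)⁻¹ with hB_def
  have hshift : ∀ n : ℕ, d ((n:ℤ) + (k:ℤ) + 1) ≤ Real.exp (-(a * (k:ℝ)^2)) * q * q ^ n := by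
    intro n
    have hna : ¬ ((n:ℤ) + k + 1).natAbs ≤ k := by omega
    rw [hd_def]; dsimp only; rw [if_neg hna]
    rw [hq_def, ← Real.exp_nat_mul, ← Real.exp_add, ← Real.exp_add]
    apply Real.exp_le_exp.mpr
    push_cast
    have hineq : (k:ℝ)^2 + (n:ℝ) + 1 ≤ ((n:ℝ) + (k:ℝ) + 1)^2 := by
      nlinarith [Nat.cast_nonneg (α := ℝ) n, Nat.cast_nonneg (α := ℝ) k,
        mul_nonneg (Nat.cast_nonneg (α := ℝ) n) (Nat.cast_nonneg (α := ℝ) k), sq_nonneg ((n:ℝ))]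
    nlinarith [mul_le_mul_of_nonneg_left hineq ha.le]
  have hgeom : Summable (fun n : ℕ => Real.exp (-(a * (k:ℝ)^2)) * q * q ^ n) :=
    (summable_geometric_of_lt_one hq0.le hq1).mul_left _
  have htail : ∀ f : ℕ → ℝ, (f = fun n : ℕ => d ((n:ℤ) + (k:ℤ) + 1)) → ∑' n : ℕ, f n ≤ B := by
    intro f hf
    rw [hf, hB_def]
    calc ∑' n : ℕ, d ((n:ℤ) + (k:ℤ) + 1) ≤ ∑' n : ℕ, Real.exp (-(a * (k:ℝ)^2)) * q * q ^ n := by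
          apply Summable.tsum_le_tsum hshift _ hgeom
          · apply Summable.of_nonneg_of_le (fun n => hd_nonneg _) hshift hgeom
      _ = Real.exp (-(a * (k:ℝ)^2)) * q * (1 - q)⁻¹ := by
          rw [tsum_mul_left, tsum_geometric_of_lt_one hq0.le hq1]
  have part1 : ∑' n : ℕ, d n ≤ B := by
    have h := Summable.sum_add_tsum_nat_add (f := fun n : ℕ => d n) (k+1) hsum1
    have hz : ∑ i ∈ Finset.range (k+1), d i = 0 := by
      apply Finset.sum_eq_zero
      intro i hi
      rw [hd_def]; dsimp only
      rw [if_pos]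
      simp only [Finset.mem_range] at hi; omega
    rw [hz, zero_add] at h
    rw [← h]
    apply htail
    funext n; congr 1 <;> omega
  have part2 : ∑' n : ℕ, d (-((n:ℤ) + 1)) ≤ B := by
    have hneg : ∀ n : ℕ, d (-((n:ℤ) + 1)) = d ((n:ℤ) + 1) := by
      intro n
      rw [hd_def]; dsimp only
      have h1 : (-((n:ℤ)+1)).natAbs = ((n:ℤ)+1).natAbs := by omega
      have h2 : ((-((n:ℤ)+1) : ℤ) : ℝ)^2 = (((n:ℤ)+1 : ℤ) : ℝ)^2 := by push_cast; ring
      rw [h1, h2]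
    simp_rw [hneg]
    have hsum2' : Summable (fun n : ℕ => d ((n:ℤ) + 1)) := by simp_rw [← hneg]; exact hsum2
    have h := Summable.sum_add_tsum_nat_add (f := fun n : ℕ => d ((n:ℤ)+1)) k hsum2'
    have hz : ∑ i ∈ Finset.range k, d ((i:ℤ)+1) = 0 := by
      apply Finset.sum_eq_zero
      intro i hi
      rw [hd_def]; dsimp only
      rw [if_pos]
      simp only [Finset.mem_range] at hi; omega
    rw [hz, zero_add] at h
    rw [← h]
    apply htail
    funext n; congr 1 <;> omega
  have hsplit := tsum_of_nat_of_neg_add_one hsum1 hsum2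
  have hBB : (∑' j : ℤ, d j) ≤ 2 * B := by
    rw [hsplit]; linarith
  refine hBB.trans ?_
  have hkey : q * (1 + a) ≤ 1 := by
    have h1 : (1:ℝ) + a ≤ Real.exp a := by
      have := Real.add_one_le_exp a; linarith
    calc q * (1 + a) ≤ q * Real.exp a := by nlinarith
      _ = 1 := by rw [hq_def, ← Real.exp_add]; simp
  have hfrac : 2 * q * (1 - q)⁻¹ ≤ π / a := by
    rw [← div_eq_mul_inv, div_le_div_iff₀ h1q ha]
    nlinarith [Real.pi_gt_three]
  calc 2 * B = (2 * q * (1-q)⁻¹) * Real.exp (-(a * (k:ℝ)^2)) := by rw [hB_def]; ring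
    _ ≤ (π / a) * Real.exp (-(a * (k:ℝ)^2)) := by
        apply mul_le_mul_of_nonneg_right hfrac (Real.exp_nonneg _)

lemma norm_exp_int (m : ℤ) (x : ℝ) : ‖Complex.exp ((m:ℂ) * π * Complex.I * x)‖ = 1 := by
  have : (m:ℂ) * π * Complex.I * x = ((m * π * x : ℝ) : ℂ) * Complex.I := by push_cast; ring
  rw [this, Complex.norm_exp_ofReal_mul_I]

lemma exp_neg_arg (j : ℤ) (x : ℝ) :
    Complex.exp (-((j:ℂ) * π * Complex.I * x)) =
      Complex.exp ((((-j : ℤ)):ℂ) * π * Complex.I * x) := by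
  congr 1; push_cast; ring

lemma ortho (m : ℤ) :
    (∫ x in Set.Icc (-1:ℝ) 1, Complex.exp ((m:ℂ) * π * Complex.I * x)) =
      if m = 0 then 2 else 0 := by
  rw [integral_Icc_eq_integral_Ioc, ← intervalIntegral.integral_of_le (by norm_num : (-1:ℝ) ≤ 1)]
  by_cases hm : m = 0
  · simp [hm]; norm_num
  · have hm' : (m:ℂ) ≠ 0 := Int.cast_ne_zero.mpr hm
    have hc : (m:ℂ) * π * Complex.I ≠ 0 :=
      mul_ne_zero (mul_ne_zero hm' (Complex.ofReal_ne_zero.mpr Real.pi_ne_zero)) Complex.I_ne_zero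
    rw [if_neg hm, integral_exp_mul_complex hc]
    have h2 : Complex.exp ((m:ℂ) * π * Complex.I * ((1:ℝ):ℂ)) =
        Complex.exp ((m:ℂ) * π * Complex.I * ((-1:ℝ):ℂ)) := by
      have he : ((m:ℂ) * π * Complex.I * ((1:ℝ):ℂ)) =
          ((m:ℂ) * π * Complex.I * ((-1:ℝ):ℂ)) + (m:ℂ) * (2 * π * Complex.I) := by
        push_cast; ring
      rw [he, Complex.exp_add, Complex.exp_int_mul_two_pi_mul_I, mul_one]
    rw [h2, sub_self, zero_div]

lemma K_expand {σ : ℝ} (hσ : 0 < σ) (u : ℝ) :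
    (K σ u : ℂ) = (1/2) * ∑' j : ℤ, (w σ j : ℂ) * Complex.exp ((j:ℂ) * π * Complex.I * u) := by
  have hπ := Real.pi_pos
  set a : ℂ := ((π * σ^2 / 2 : ℝ) : ℂ) with ha_def
  have ha : 0 < a.re := by rw [ha_def, Complex.ofReal_re]; positivity
  set b : ℂ := -Complex.I * u / 2 with hb_def
  have key := Complex.tsum_exp_neg_quadratic ha b
  have hs : a ^ (1/2 : ℂ) = ((Real.sqrt (π * σ^2 / 2) : ℝ) : ℂ) := by
    rw [Real.sqrt_eq_rpow, show (1/2 : ℂ) = ((1/2 : ℝ) : ℂ) by norm_num,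
      Complex.ofReal_cpow (by positivity)]
  have hs_pos : (0:ℝ) < Real.sqrt (π * σ^2 / 2) := Real.sqrt_pos.mpr (by positivity)
  have hB : (∑' n : ℤ, Complex.exp (-π / a * (n + Complex.I * b)^2))
      = ((Real.sqrt (π * σ^2 / 2) : ℝ) : ℂ) * ∑' n : ℤ,
          Complex.exp (-π * a * n^2 + 2 * π * b * n) := by
    rw [key, hs, ← mul_assoc, mul_one_div, div_self (by exact_mod_cast hs_pos.ne'), one_mul]
  have hA : (K σ u : ℂ) = ((1 / (σ * Real.sqrt (2 * π)) : ℝ) : ℂ) *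
      ∑' n : ℤ, Complex.exp (-π / a * (n + Complex.I * b)^2) := by
    rw [K, Complex.ofReal_tsum, ← tsum_mul_left]
    congr 1; funext j
    rw [gauss, Complex.ofReal_mul, Complex.ofReal_exp]
    congr 1
    have hIb : Complex.I * b = (u:ℂ) / 2 := by
      rw [hb_def, show Complex.I * (-Complex.I * (u:ℂ) / 2) =
        -(Complex.I * Complex.I) * (u:ℂ) / 2 by ring, Complex.I_mul_I]; ring
    rw [hIb, ha_def]
    have haz : ((π * σ^2 / 2 : ℝ) : ℂ) ≠ 0 := by
      exact_mod_cast (by positivity : (0:ℝ) < π * σ^2 / 2).ne'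
    congr 1
    rw [eq_comm, div_mul_eq_mul_div, div_eq_iff haz]
    push_cast
    field_simp [Complex.ofReal_ne_zero.mpr hσ.ne']
    ring
  have hC : (∑' n : ℤ, Complex.exp (-π * a * n^2 + 2 * π * b * n))
      = ∑' n : ℤ, (w σ n : ℂ) * Complex.exp ((n:ℂ) * π * Complex.I * u) := by
    rw [← (Equiv.neg ℤ).tsum_eq (fun n : ℤ => (w σ n : ℂ) * Complex.exp ((n:ℂ) * π * Complex.I * u))]
    congr 1; funext n
    simp only [Equiv.neg_apply]
    rw [w, Complex.ofReal_exp, ← Complex.exp_add]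
    congr 1
    rw [ha_def, hb_def]
    push_cast
    ring
  have h1 : Real.sqrt (π * σ^2/2) = σ * Real.sqrt (π/2) := by
    rw [show π * σ^2/2 = σ^2 * (π/2) by ring, Real.sqrt_mul (sq_nonneg σ), Real.sqrt_sq hσ.le]
  have h2 : Real.sqrt (2*π) = 2 * Real.sqrt (π/2) := by
    rw [show (2:ℝ)*π = 2^2*(π/2) by ring, Real.sqrt_mul (by norm_num), Real.sqrt_sq (by norm_num)]
  have h3 : Real.sqrt (π/2) ≠ 0 := (Real.sqrt_pos.mpr (by positivity)).ne'
  have hfin : (1 / (σ * Real.sqrt (2*π))) * Real.sqrt (π * σ^2/2) = 1/2 := by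
    rw [h1, h2]; field_simp
  rw [hA, hB, ← mul_assoc, ← Complex.ofReal_mul, hfin, hC]
  norm_num

-- integrability of f times a character
lemma integrable_mul_exp {h : ℝ → ℂ} (hh : IntegrableOn h (Set.Icc (-1:ℝ) 1)) (m : ℤ) :
    IntegrableOn (fun x : ℝ => h x * Complex.exp ((m:ℂ) * π * Complex.I * x))
      (Set.Icc (-1:ℝ) 1) := by
  have heq : (fun x : ℝ => h x * Complex.exp ((m:ℂ) * π * Complex.I * x))
      = fun x : ℝ => Complex.exp ((m:ℂ) * π * Complex.I * x) * h x :=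
    funext fun x => mul_comm _ _
  rw [IntegrableOn, heq]
  apply Integrable.bdd_mul (c := 1) hh
  · apply Continuous.aestronglyMeasurable
    exact Complex.continuous_exp.comp
      ((continuous_const.mul Complex.continuous_ofReal))
  · filter_upwards with x
    rw [norm_exp_int]

lemma galerkin_continuous (k : ℕ) (f : ℝ → ℂ) : Continuous (galerkin k f) := by
  apply continuous_finset_sum
  intro j _
  exact continuous_const.mul (Complex.continuous_exp.comp
    (continuous_const.mul Complex.continuous_ofReal))

lemma Fc_norm_le (f : ℝ → ℂ) (j : ℤ) :
    ‖Fc f j‖ ≤ (1/2) * ∫ x in Set.Icc (-1:ℝ) 1, ‖f x‖ := by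
  rw [Fc, norm_mul]
  have h1 : ‖(1/2 : ℂ)‖ = 1/2 := by norm_num
  rw [h1]
  apply mul_le_mul_of_nonneg_left _ (by norm_num)
  refine (norm_integral_le_integral_norm _).trans ?_
  apply le_of_eq
  apply integral_congr_ae
  filter_upwards with x
  rw [norm_mul, exp_neg_arg, norm_exp_int, mul_one]

lemma Fc_galerkin (k : ℕ) (f : ℝ → ℂ) (j : ℤ) :
    Fc (galerkin k f) j = if j ∈ Finset.Icc (-(k:ℤ)) (k:ℤ) then Fc f j else 0 := by
  have hint : ∀ m : ℤ, IntegrableOn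
      (fun x : ℝ => Fc f m * Complex.exp (((m - j : ℤ):ℂ) * π * Complex.I * x))
      (Set.Icc (-1:ℝ) 1) := by
    intro m
    apply Continuous.integrableOn_Icc
    exact continuous_const.mul (Complex.continuous_exp.comp
      (continuous_const.mul Complex.continuous_ofReal))
  have hexpand : ∀ x : ℝ,
      galerkin k f x * Complex.exp (-((j:ℂ) * π * Complex.I * x)) =
        ∑ m ∈ Finset.Icc (-(k:ℤ)) (k:ℤ),
          Fc f m * Complex.exp (((m - j : ℤ):ℂ) * π * Complex.I * x) := by
    intro x
    rw [galerkin, Finset.sum_mul]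
    apply Finset.sum_congr rfl
    intro m _
    rw [mul_assoc, ← Complex.exp_add]
    congr 2
    push_cast
    ring
  rw [Fc]
  calc (1/2 : ℂ) * ∫ x in Set.Icc (-1:ℝ) 1,
        galerkin k f x * Complex.exp (-((j:ℂ) * π * Complex.I * x))
      = (1/2 : ℂ) * ∫ x in Set.Icc (-1:ℝ) 1, ∑ m ∈ Finset.Icc (-(k:ℤ)) (k:ℤ),
          Fc f m * Complex.exp (((m - j : ℤ):ℂ) * π * Complex.I * x) := by
        congr 1
        apply integral_congr_ae
        filter_upwards with x
        exact hexpand x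
    _ = (1/2 : ℂ) * ∑ m ∈ Finset.Icc (-(k:ℤ)) (k:ℤ),
          ∫ x in Set.Icc (-1:ℝ) 1, Fc f m * Complex.exp (((m - j : ℤ):ℂ) * π * Complex.I * x) := by
        rw [integral_finset_sum _ (fun m _ => hint m)]
    _ = (1/2 : ℂ) * ∑ m ∈ Finset.Icc (-(k:ℤ)) (k:ℤ),
          Fc f m * (if (m - j : ℤ) = 0 then 2 else 0) := by
        congr 1
        apply Finset.sum_congr rfl
        intro m _
        rw [integral_const_mul, ortho]
    _ = if j ∈ Finset.Icc (-(k:ℤ)) (k:ℤ) then Fc f j else 0 := by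
        by_cases hj : j ∈ Finset.Icc (-(k:ℤ)) (k:ℤ)
        · rw [if_pos hj, Finset.sum_eq_single_of_mem j hj]
          · rw [if_pos (sub_self j), ]
            ring
          · intro m _ hm
            rw [if_neg (sub_ne_zero.mpr hm), mul_zero]
        · rw [if_neg hj, Finset.sum_eq_zero, mul_zero]
          intro m hm
          have : m ≠ j := fun h => hj (h ▸ hm)
          rw [if_neg (sub_ne_zero.mpr this), mul_zero]

lemma Fc_sub (f g : ℝ → ℂ) (hf : IntegrableOn f (Set.Icc (-1:ℝ) 1))
    (hg : IntegrableOn g (Set.Icc (-1:ℝ) 1)) (j : ℤ) :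
    Fc (fun y => f y - g y) j = Fc f j - Fc g j := by
  have h1 := integrable_mul_exp hf (-j)
  have h2 := integrable_mul_exp hg (-j)
  simp only [Fc]
  rw [show (fun x => (f x - g x) * Complex.exp (-((j:ℂ) * π * Complex.I * x)))
    = fun x => f x * Complex.exp (-((j:ℂ) * π * Complex.I * x))
      - g x * Complex.exp (-((j:ℂ) * π * Complex.I * x)) from funext (fun x => by ring)]
  have h1' : IntegrableOn (fun x : ℝ => f x * Complex.exp (-((j:ℂ) * π * Complex.I * x)))
      (Set.Icc (-1:ℝ) 1) := by simp_rw [exp_neg_arg]; exact h1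
  have h2' : IntegrableOn (fun x : ℝ => g x * Complex.exp (-((j:ℂ) * π * Complex.I * x)))
      (Set.Icc (-1:ℝ) 1) := by simp_rw [exp_neg_arg]; exact h2
  rw [integral_sub h1' h2', mul_sub]

lemma Nop_eq {σ : ℝ} (hσ : 0 < σ) {g : ℝ → ℂ} (hg : IntegrableOn g (Set.Icc (-1:ℝ) 1))
    (x : ℝ) :
    Nop σ g x = ∑' j : ℤ, ((w σ j : ℂ) * Fc g j) * Complex.exp ((j:ℂ) * π * Complex.I * x) := by
  set F : ℤ → ℝ → ℂ := fun j y =>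
    ((1/2 : ℂ) * (w σ j : ℂ) * Complex.exp ((j:ℂ) * π * Complex.I * x)) *
      (g y * Complex.exp ((((-j : ℤ)):ℂ) * π * Complex.I * y)) with hF_def
  have hInt : ∀ j : ℤ, Integrable (F j) (volume.restrict (Set.Icc (-1:ℝ) 1)) := by
    intro j
    exact (integrable_mul_exp hg (-j)).const_mul _
  have hnorm : ∀ j y, ‖F j y‖ = (w σ j) * ((1/2) * ‖g y‖) := by
    intro j y
    rw [hF_def]
    simp only [norm_mul, norm_exp_int]
    rw [Complex.norm_real, Real.norm_eq_abs, abs_of_pos (w_pos σ j)]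
    norm_num
    ring
  have hIntNorm : ∀ j : ℤ, (∫ y in Set.Icc (-1:ℝ) 1, ‖F j y‖)
      = w σ j * ((1/2) * ∫ y in Set.Icc (-1:ℝ) 1, ‖g y‖) := by
    intro j
    simp_rw [hnorm]
    rw [integral_const_mul, integral_const_mul]
  have hSum : Summable (fun j : ℤ => ∫ y in Set.Icc (-1:ℝ) 1, ‖F j y‖) := by
    simp_rw [hIntNorm]
    exact (summable_w hσ).mul_right _
  have hswap := integral_tsum_of_summable_integral_norm hInt hSum
  have hpt : ∀ y : ℝ, (K σ (x - y) : ℂ) * g y = ∑' j : ℤ, F j y := by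
    intro y
    have hterm : ∀ j : ℤ, F j y
        = (1/2 : ℂ) * ((w σ j : ℂ) * Complex.exp ((j:ℂ) * π * Complex.I * ((x - y : ℝ) : ℂ)))
            * g y := by
      intro j
      have hexp : Complex.exp ((j:ℂ) * π * Complex.I * x) *
          Complex.exp ((((-j : ℤ)):ℂ) * π * Complex.I * y)
          = Complex.exp ((j:ℂ) * π * Complex.I * ((x - y : ℝ) : ℂ)) := by
        rw [← Complex.exp_add]
        congr 1
        push_cast
        ring
      calc F j y = (1/2 : ℂ) * (w σ j : ℂ) * (Complex.exp ((j:ℂ) * π * Complex.I * x) *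
            Complex.exp ((((-j : ℤ)):ℂ) * π * Complex.I * y)) * g y := by
            rw [hF_def]; ring
        _ = (1/2 : ℂ) * ((w σ j : ℂ) * Complex.exp ((j:ℂ) * π * Complex.I * ((x - y : ℝ) : ℂ)))
            * g y := by rw [hexp]; ring
    rw [K_expand hσ (x - y), ← tsum_mul_left, ← tsum_mul_right]
    congr 1
    funext j
    exact (hterm j).symm
  have hIntEq : ∀ j : ℤ, (∫ y in Set.Icc (-1:ℝ) 1, F j y)
      = ((w σ j : ℂ) * Fc g j) * Complex.exp ((j:ℂ) * π * Complex.I * x) := by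
    intro j
    rw [hF_def]
    dsimp only
    rw [integral_const_mul]
    have hI : (∫ y in Set.Icc (-1:ℝ) 1, g y * Complex.exp ((((-j : ℤ)):ℂ) * π * Complex.I * y))
        = ∫ y in Set.Icc (-1:ℝ) 1, g y * Complex.exp (-((j:ℂ) * π * Complex.I * y)) := by
      apply integral_congr_ae
      filter_upwards with y
      rw [exp_neg_arg]
    rw [hI, Fc]
    ring
  calc Nop σ g x = ∫ y in Set.Icc (-1:ℝ) 1, ∑' j : ℤ, F j y := by
        rw [Nop]
        apply integral_congr_ae
        filter_upwards with y
        exact hpt y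
    _ = ∑' j : ℤ, ∫ y in Set.Icc (-1:ℝ) 1, F j y := hswap.symm
    _ = ∑' j : ℤ, ((w σ j : ℂ) * Fc g j) * Complex.exp ((j:ℂ) * π * Complex.I * x) := by
        congr 1
        funext j
        exact hIntEq j

lemma parseval (c : ℤ → ℂ) (hc : Summable (fun j => ‖c j‖)) :
    ∫ x in Set.Icc (-1:ℝ) 1, ‖∑' j : ℤ, c j * Complex.exp ((j:ℂ) * π * Complex.I * x)‖^2
      = 2 * ∑' j : ℤ, ‖c j‖^2 := by
  set h : ℝ → ℂ := fun x => ∑' j : ℤ, c j * Complex.exp ((j:ℂ) * π * Complex.I * x) with hh_def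
  have hterm_cont : ∀ j : ℤ, Continuous (fun x : ℝ => c j * Complex.exp ((j:ℂ) * π * Complex.I * x)) :=
    fun j => continuous_const.mul (Complex.continuous_exp.comp
      (continuous_const.mul Complex.continuous_ofReal))
  have hterm_bound : ∀ (j : ℤ) (x : ℝ), ‖c j * Complex.exp ((j:ℂ) * π * Complex.I * x)‖ ≤ ‖c j‖ := by
    intro j x
    rw [norm_mul, norm_exp_int, mul_one]
  have h_cont : Continuous h := continuous_tsum hterm_cont hc hterm_bound
  have hpt_sum : ∀ x : ℝ, Summable (fun j : ℤ => c j * Complex.exp ((j:ℂ) * π * Complex.I * x)) := by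
    intro x
    apply Summable.of_norm
    apply Summable.of_nonneg_of_le (fun j => norm_nonneg _) (fun j => hterm_bound j x) hc
  have h_int : IntegrableOn h (Set.Icc (-1:ℝ) 1) := h_cont.integrableOn_Icc
  have h_norm_int : Integrable (fun x => ‖h x‖) (volume.restrict (Set.Icc (-1:ℝ) 1)) := h_int.norm
  -- conjugate expansion
  have conj_h : ∀ x : ℝ, (starRingEnd ℂ) (h x)
      = ∑' l : ℤ, (starRingEnd ℂ) (c l) * Complex.exp ((((-l : ℤ)):ℂ) * π * Complex.I * x) := by
    intro x
    have hmap := Complex.conjCLE.toContinuousLinearMap.map_tsum (hpt_sum x)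
    simp only [ContinuousLinearEquiv.coe_coe, Complex.conjCLE_apply] at hmap
    rw [hh_def]
    dsimp only
    rw [hmap]
    congr 1
    funext j
    rw [map_mul, ← Complex.exp_conj]
    congr 1
    simp only [map_mul, Complex.conj_I, Complex.conj_ofReal, map_intCast]
    push_cast
    ring
  have inner : ∀ l : ℤ, (∫ x in Set.Icc (-1:ℝ) 1,
      Complex.exp ((((-l:ℤ)):ℂ) * π * Complex.I * x) * h x) = 2 * c l := by
    intro l
    set G : ℤ → ℝ → ℂ := fun j x =>
      Complex.exp ((((-l:ℤ)):ℂ) * π * Complex.I * x) *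
        (c j * Complex.exp ((j:ℂ) * π * Complex.I * x)) with hG_def
    have hGint : ∀ j, Integrable (G j) (volume.restrict (Set.Icc (-1:ℝ) 1)) := by
      intro j
      apply Continuous.integrableOn_Icc
      exact (Complex.continuous_exp.comp
        (continuous_const.mul Complex.continuous_ofReal)).mul (hterm_cont j)
    have hGnorm : ∀ j, (fun x : ℝ => ‖G j x‖) = fun _ : ℝ => ‖c j‖ := by
      intro j; funext x
      rw [hG_def]; dsimp only
      rw [norm_mul, norm_mul, norm_exp_int, norm_exp_int, one_mul, mul_one]
    have hGsum : Summable (fun j : ℤ => ∫ x in Set.Icc (-1:ℝ) 1, ‖G j x‖) := by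
      have heq : (fun j : ℤ => ∫ x in Set.Icc (-1:ℝ) 1, ‖G j x‖) = fun j => 2 * ‖c j‖ := by
        funext j
        rw [hGnorm j, setIntegral_const, Real.volume_real_Icc, smul_eq_mul]
        norm_num
      rw [heq]
      exact hc.mul_left 2
    have hswap := integral_tsum_of_summable_integral_norm hGint hGsum
    have hGval : ∀ j : ℤ, (∫ x in Set.Icc (-1:ℝ) 1, G j x)
        = c j * (if (j - l : ℤ) = 0 then 2 else 0) := by
      intro j
      have hGx : ∀ x : ℝ, G j x = c j * Complex.exp (((j - l : ℤ):ℂ) * π * Complex.I * x) := by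
        intro x
        rw [hG_def]; dsimp only
        rw [show Complex.exp ((((-l:ℤ)):ℂ) * π * Complex.I * x) *
            (c j * Complex.exp ((j:ℂ) * π * Complex.I * x))
          = c j * (Complex.exp ((j:ℂ) * π * Complex.I * x) *
            Complex.exp ((((-l:ℤ)):ℂ) * π * Complex.I * x)) from by ring, ← Complex.exp_add]
        congr 2
        push_cast
        ring
      rw [integral_congr_ae (Filter.Eventually.of_forall hGx), integral_const_mul, ortho]
    calc (∫ x in Set.Icc (-1:ℝ) 1, Complex.exp ((((-l:ℤ)):ℂ) * π * Complex.I * x) * h x)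
        = ∫ x in Set.Icc (-1:ℝ) 1, ∑' j, G j x := by
          apply integral_congr_ae
          filter_upwards with x
          rw [hh_def]; dsimp only
          rw [← tsum_mul_left]
      _ = ∑' j, ∫ x in Set.Icc (-1:ℝ) 1, G j x := hswap.symm
      _ = ∑' j, c j * (if (j - l : ℤ) = 0 then 2 else 0) := by
          congr 1; funext j; exact hGval j
      _ = 2 * c l := by
          rw [tsum_eq_single l]
          · rw [if_pos (sub_self l)]; ring
          · intro j hj
            rw [if_neg (sub_ne_zero.mpr hj), mul_zero]
  have hconj_int : ∀ l : ℤ, Integrable (fun x : ℝ => (starRingEnd ℂ) (c l) *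
      Complex.exp ((((-l:ℤ)):ℂ) * π * Complex.I * x) * h x)
      (volume.restrict (Set.Icc (-1:ℝ) 1)) := by
    intro l
    have heq : (fun x : ℝ => (starRingEnd ℂ) (c l) *
        Complex.exp ((((-l:ℤ)):ℂ) * π * Complex.I * x) * h x)
        = fun x : ℝ => ((starRingEnd ℂ) (c l) *
          Complex.exp ((((-l:ℤ)):ℂ) * π * Complex.I * x)) * h x := by
      funext x
      ring
    rw [heq]
    apply Integrable.bdd_mul (c := ‖c l‖) h_int
    · apply Continuous.aestronglyMeasurable
      exact continuous_const.mul (Complex.continuous_exp.comp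
        (continuous_const.mul Complex.continuous_ofReal))
    · filter_upwards with x
      rw [norm_mul, norm_exp_int, mul_one, RCLike.norm_conj]
  have hconj_sum : Summable (fun l : ℤ => ∫ x in Set.Icc (-1:ℝ) 1,
      ‖(starRingEnd ℂ) (c l) * Complex.exp ((((-l:ℤ)):ℂ) * π * Complex.I * x) * h x‖) := by
    have heq : ∀ (l : ℤ) (x : ℝ), ‖(starRingEnd ℂ) (c l) *
        Complex.exp ((((-l:ℤ)):ℂ) * π * Complex.I * x) * h x‖ = ‖c l‖ * ‖h x‖ := by
      intro l x
      rw [norm_mul, norm_mul, norm_exp_int, RCLike.norm_conj, mul_one]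
    simp_rw [heq, integral_const_mul]
    exact hc.mul_right _
  have main : (∫ x in Set.Icc (-1:ℝ) 1, (starRingEnd ℂ) (h x) * h x)
      = 2 * ((∑' l : ℤ, ‖c l‖^2 : ℝ) : ℂ) := by
    calc (∫ x in Set.Icc (-1:ℝ) 1, (starRingEnd ℂ) (h x) * h x)
        = ∫ x in Set.Icc (-1:ℝ) 1, ∑' l : ℤ, (starRingEnd ℂ) (c l) *
            Complex.exp ((((-l:ℤ)):ℂ) * π * Complex.I * x) * h x := by
          apply integral_congr_ae
          filter_upwards with x
          rw [conj_h x, ← tsum_mul_right]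
      _ = ∑' l : ℤ, ∫ x in Set.Icc (-1:ℝ) 1, (starRingEnd ℂ) (c l) *
            Complex.exp ((((-l:ℤ)):ℂ) * π * Complex.I * x) * h x :=
          (integral_tsum_of_summable_integral_norm hconj_int hconj_sum).symm
      _ = ∑' l : ℤ, (starRingEnd ℂ) (c l) * (2 * c l) := by
          congr 1; funext l
          rw [show (fun x : ℝ => (starRingEnd ℂ) (c l) *
              Complex.exp ((((-l:ℤ)):ℂ) * π * Complex.I * x) * h x)
            = fun x : ℝ => (starRingEnd ℂ) (c l) *
              (Complex.exp ((((-l:ℤ)):ℂ) * π * Complex.I * x) * h x)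
            from funext fun y => mul_assoc _ _ _]
          rw [integral_const_mul, inner l]
      _ = 2 * ((∑' l : ℤ, ‖c l‖^2 : ℝ) : ℂ) := by
          rw [Complex.ofReal_tsum, ← tsum_mul_left]
          congr 1; funext l
          rw [show (starRingEnd ℂ) (c l) * (2 * c l) = 2 * (c l * (starRingEnd ℂ) (c l)) from by
            ring, Complex.mul_conj, Complex.normSq_eq_norm_sq]
  have hre : ((∫ x in Set.Icc (-1:ℝ) 1, ‖h x‖^2 : ℝ) : ℂ)
      = ((2 * ∑' j : ℤ, ‖c j‖^2 : ℝ) : ℂ) := by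
    calc ((∫ x in Set.Icc (-1:ℝ) 1, ‖h x‖^2 : ℝ) : ℂ)
        = ∫ x in Set.Icc (-1:ℝ) 1, ((‖h x‖^2 : ℝ) : ℂ) := integral_ofReal.symm
      _ = ∫ x in Set.Icc (-1:ℝ) 1, (starRingEnd ℂ) (h x) * h x := by
          apply integral_congr_ae
          filter_upwards with x
          rw [show (starRingEnd ℂ) (h x) * h x = h x * (starRingEnd ℂ) (h x) from mul_comm _ _,
            Complex.mul_conj, Complex.normSq_eq_norm_sq]
      _ = 2 * ((∑' l : ℤ, ‖c l‖^2 : ℝ) : ℂ) := main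
      _ = ((2 * ∑' j : ℤ, ‖c j‖^2 : ℝ) : ℂ) := by push_cast; ring
  exact Complex.ofReal_injective hre

end TailAux

open TailAux

theorem tail_estimate (σ : ℝ) (hσ : 0 < σ) (k : ℕ) (f : ℝ → ℂ)
    (hf : IntegrableOn f (Set.Icc (-1) 1)) :
    Real.sqrt (∫ x in Set.Icc (-1 : ℝ) 1, ‖Nop σ (fun y => f y - galerkin k f y) x‖ ^ 2) ≤
      (1 / (σ * Real.sqrt (2 * π))) * Real.exp (-(σ ^ 2 * (k : ℝ) ^ 2 * π ^ 2 / 2)) *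
        ∫ x in Set.Icc (-1 : ℝ) 1, ‖f x‖ := by
  classical
  set If : ℝ := ∫ x in Set.Icc (-1:ℝ) 1, ‖f x‖ with hIf_def
  have hIf0 : 0 ≤ If := integral_nonneg (fun x => norm_nonneg _)
  set g : ℝ → ℂ := fun y => f y - galerkin k f y with hg_def
  have hgal : IntegrableOn (galerkin k f) (Set.Icc (-1:ℝ) 1) :=
    (galerkin_continuous k f).integrableOn_Icc
  have hg : IntegrableOn g (Set.Icc (-1:ℝ) 1) := hf.sub hgal
  set c : ℤ → ℂ := fun j => (w σ j : ℂ) * Fc g j with hc_def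
  have hFcg : ∀ j : ℤ, Fc g j = if j ∈ Finset.Icc (-(k:ℤ)) (k:ℤ) then 0 else Fc f j := by
    intro j
    rw [hg_def, Fc_sub f (galerkin k f) hf hgal, Fc_galerkin]
    split_ifs <;> simp
  have hFcg_norm : ∀ j : ℤ, ‖Fc g j‖ ≤ (1/2) * If := by
    intro j
    rw [hFcg j]
    split_ifs
    · rw [norm_zero]; positivity
    · exact Fc_norm_le f j
  have hc_norm : ∀ j : ℤ, ‖c j‖ ≤ w σ j * ((1/2) * If) := by
    intro j
    rw [hc_def]; dsimp only
    rw [norm_mul, Complex.norm_real, Real.norm_eq_abs, abs_of_pos (w_pos σ j)]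
    exact mul_le_mul_of_nonneg_left (hFcg_norm j) (w_pos σ j).le
  have hc_sum : Summable (fun j => ‖c j‖) :=
    Summable.of_nonneg_of_le (fun j => norm_nonneg _) hc_norm ((summable_w hσ).mul_right _)
  have hNop : ∀ x : ℝ, Nop σ g x
      = ∑' j : ℤ, c j * Complex.exp ((j:ℂ) * π * Complex.I * x) :=
    fun x => Nop_eq hσ hg x
  have hpars := parseval c hc_sum
  have hintEq : (∫ x in Set.Icc (-1:ℝ) 1, ‖Nop σ g x‖^2) = 2 * ∑' j : ℤ, ‖c j‖^2 := by
    rw [← hpars]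
    apply integral_congr_ae
    filter_upwards with x
    rw [hNop x]
  set a : ℝ := σ^2 * π^2 with ha_def
  have ha : 0 < a := by rw [ha_def]; positivity
  set D : ℤ → ℝ := fun j => if j.natAbs ≤ k then 0 else Real.exp (-(a * (j:ℝ)^2)) with hD_def
  have hmem : ∀ j : ℤ, j ∈ Finset.Icc (-(k:ℤ)) (k:ℤ) ↔ j.natAbs ≤ k := by
    intro j; rw [Finset.mem_Icc]; omega
  have hterm : ∀ j : ℤ, ‖c j‖^2 ≤ ((1/2) * If)^2 * D j := by
    intro j
    by_cases hj : j.natAbs ≤ k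
    · have hz : Fc g j = 0 := by rw [hFcg j, if_pos ((hmem j).mpr hj)]
      have hcz : c j = 0 := by rw [hc_def]; dsimp only; rw [hz, mul_zero]
      rw [hcz, norm_zero, hD_def]; dsimp only
      rw [if_pos hj, mul_zero]
      norm_num
    · have h1 : ‖c j‖ ≤ w σ j * ((1/2) * If) := hc_norm j
      have h2 : ‖c j‖^2 ≤ (w σ j * ((1/2) * If))^2 :=
        pow_le_pow_left₀ (norm_nonneg _) h1 2
      refine h2.trans (le_of_eq ?_)
      rw [hD_def]; dsimp only; rw [if_neg hj, mul_pow]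
      rw [show (w σ j)^2 = Real.exp (-(a * (j:ℝ)^2)) from by
        rw [w, sq, ← Real.exp_add, ha_def]; congr 1; ring]
      ring
  have hD_sum : Summable D := by
    apply Summable.of_nonneg_of_le _ _ (summable_exp_sq ha)
    · intro j; rw [hD_def]; dsimp only; split_ifs <;> positivity
    · intro j; rw [hD_def]; dsimp only; split_ifs
      · positivity
      · exact le_rfl
  have hcsq_sum : Summable (fun j : ℤ => ‖c j‖^2) :=
    Summable.of_nonneg_of_le (fun j => sq_nonneg _) hterm (hD_sum.mul_left _)
  have hsum_le : ∑' j : ℤ, ‖c j‖^2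
      ≤ ((1/2)*If)^2 * ((π/a) * Real.exp (-(a * (k:ℝ)^2))) := by
    calc ∑' j : ℤ, ‖c j‖^2 ≤ ∑' j : ℤ, ((1/2)*If)^2 * D j :=
          Summable.tsum_le_tsum hterm hcsq_sum (hD_sum.mul_left _)
      _ = ((1/2)*If)^2 * ∑' j : ℤ, D j := tsum_mul_left
      _ ≤ ((1/2)*If)^2 * ((π/a) * Real.exp (-(a * (k:ℝ)^2))) := by
          apply mul_le_mul_of_nonneg_left _ (sq_nonneg _)
          rw [hD_def]
          exact tail_sum_le ha k
  set Γ : ℝ := (1 / (σ * Real.sqrt (2*π))) * Real.exp (-(σ^2 * (k:ℝ)^2 * π^2 / 2)) with hΓ_def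
  have hsqrt2π : 0 < Real.sqrt (2*π) := Real.sqrt_pos.mpr (by positivity)
  have hΓ0 : 0 ≤ Γ := by rw [hΓ_def]; positivity
  have hΓsq : (Γ * If)^2 = 2 * (((1/2)*If)^2 * ((π/a) * Real.exp (-(a * (k:ℝ)^2)))) := by
    have e1 : Real.sqrt (2*π) ^ 2 = 2*π := Real.sq_sqrt (by positivity)
    have e2 : Real.exp (-(σ^2 * (k:ℝ)^2 * π^2 / 2))^2
        = Real.exp (-(a * (k:ℝ)^2)) := by
      rw [sq, ← Real.exp_add, ha_def]; congr 1; ring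
    rw [hΓ_def, mul_pow, mul_pow, e2, div_pow, one_pow, mul_pow, e1, ha_def]
    field_simp
  have hfinal : (∫ x in Set.Icc (-1:ℝ) 1, ‖Nop σ g x‖^2) ≤ (Γ * If)^2 := by
    rw [hintEq, hΓsq]
    linarith [hsum_le]
  calc Real.sqrt (∫ x in Set.Icc (-1:ℝ) 1, ‖Nop σ g x‖^2)
      ≤ Real.sqrt ((Γ * If)^2) := Real.sqrt_le_sqrt hfinal
    _ = Γ * If := Real.sqrt_sq (by positivity)
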